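/- Let a > 0 and B > 0 with a*B > 1, and define g : (0, B) → ℝ by g(k) = 2*a*k + log(B - k) - log(B + k). Then g(k) tends to -∞ as k tends to B from the left, and g has exactly one zero in the open interval (0, B). -/

import Mathlib

open Real Filter Set Topology

theorem robin_g_unique_zero (a B : ℝ) (ha : 0 < a) (hB : 0 < B) (hab : 1 < a * B)
    (g : ℝ → ℝ)
    (hg : ∀ k, g k = 2 * a * k + Real.log (B - k) - Real.log (B + k)) :
    Filter.Tendsto g (nhdsWithin B (Set.Iio B)) Filter.atBot ∧
    (∃! k : ℝ, k ∈ Set.Ioo 0 B ∧ g k = 0) := by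
  have hgf : g = fun k => 2 * a * k + Real.log (B - k) - Real.log (B + k) := funext hg
  subst hgf
  set g : ℝ → ℝ := fun k => 2 * a * k + Real.log (B - k) - Real.log (B + k) with hgdef
  -- derivative
  have hderiv : ∀ x ∈ Ioo (-B) B, HasDerivAt g (2*a - (B-x)⁻¹ - (B+x)⁻¹) x := by
    intro x hx
    have h1 : (0:ℝ) < B - x := by linarith [hx.2]
    have h2 : (0:ℝ) < B + x := by linarith [hx.1]
    have d1 : HasDerivAt (fun k : ℝ => B - k) (-1) x := by
      simpa using (hasDerivAt_id x).const_sub B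
    have d2 : HasDerivAt (fun k : ℝ => B + k) 1 x := by
      simpa using (hasDerivAt_id x).const_add B
    have dl1 : HasDerivAt (fun k => Real.log (B - k)) ((-1) / (B - x)) x :=
      d1.log h1.ne'
    have dl2 : HasDerivAt (fun k => Real.log (B + k)) (1 / (B + x)) x :=
      d2.log h2.ne'
    have d3 : HasDerivAt (fun k : ℝ => 2 * a * k) (2 * a) x := by
      simpa using (hasDerivAt_id x).const_mul (2 * a)
    have := (d3.add dl1).sub dl2
    have e : 2*a - (B-x)⁻¹ - (B+x)⁻¹ = 2 * a + -1 / (B - x) - 1 / (B + x) := by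
      rw [neg_div, one_div, one_div]
      ring
    rw [e]; exact this
  have hg0 : g 0 = 0 := by simp [hgdef]
  -- continuity on Ico 0 B
  have hcont : ContinuousOn g (Ico 0 B) := by
    apply ContinuousOn.sub
    apply ContinuousOn.add (by fun_prop)
    · exact Real.continuousOn_log.comp (by fun_prop)
        (fun x hx => by simp; intro h; nlinarith [hx.1, hx.2])
    · exact Real.continuousOn_log.comp (by fun_prop)
        (fun x hx => by simp; intro h; nlinarith [hx.1, hx.2])
  -- strict concavity
  have hconc : StrictConcaveOn ℝ (Ico 0 B) g := by
    apply StrictAntiOn.strictConcaveOn_of_deriv (convex_Ico 0 B) hcont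
    rw [interior_Ico]
    intro x hx y hy hxy
    have hdx : deriv g x = 2*a - (B-x)⁻¹ - (B+x)⁻¹ :=
      (hderiv x ⟨by linarith [hx.1], hx.2⟩).deriv
    have hdy : deriv g y = 2*a - (B-y)⁻¹ - (B+y)⁻¹ :=
      (hderiv y ⟨by linarith [hy.1], hy.2⟩).deriv
    rw [hdx, hdy]
    have hx1 : (0:ℝ) < B - x := by linarith [hx.2]
    have hx2 : (0:ℝ) < B + x := by linarith [hx.1]
    have hy1 : (0:ℝ) < B - y := by linarith [hy.2]
    have hy2 : (0:ℝ) < B + y := by linarith [hy.1]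
    have e1 : (B-x)⁻¹ + (B+x)⁻¹ = 2*B/((B-x)*(B+x)) := by field_simp; ring
    have e2 : (B-y)⁻¹ + (B+y)⁻¹ = 2*B/((B-y)*(B+y)) := by field_simp; ring
    have hlt : (B-y)*(B+y) < (B-x)*(B+x) := by nlinarith [hx.1, hy.1, hxy]
    have := div_lt_div_of_pos_left (by linarith : (0:ℝ) < 2*B)
      (mul_pos hy1 hy2) hlt
    rw [← e1, ← e2] at this
    linarith
  -- no two distinct zeros
  have huniq : ∀ x y, x ∈ Ioo 0 B → y ∈ Ioo 0 B → x < y → g x = 0 → g y = 0 → False := by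
    intro x y hx hy hxy hgx hgy
    have hy0 : (0:ℝ) < y := hy.1
    obtain ⟨-, hstrict⟩ := hconc
    have key := hstrict (x := 0) ⟨le_refl 0, hB⟩ (y := y) ⟨hy0.le, hy.2⟩
      (by linarith) (a := (y - x)/y) (b := x/y)
      (div_pos (by linarith) hy0) (div_pos hx.1 hy0) (by field_simp; ring)
    rw [hg0, hgy] at key
    have hc : ((y - x)/y) • (0:ℝ) + (x/y) • y = x := by
      rw [smul_eq_mul, smul_eq_mul, mul_zero, zero_add, div_mul_cancel₀ _ hy0.ne']
    rw [hc] at key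
    simp at key
    linarith
  -- tendsto atBot
  have htendsto : Tendsto g (𝓝[<] B) atBot := by
    have h1 : Tendsto (fun k => B - k) (𝓝[<] B) (𝓝[>] (0:ℝ)) := by
      rw [tendsto_nhdsWithin_iff]
      constructor
      · have : Tendsto (fun k => B - k) (𝓝 B) (𝓝 (B - B)) :=
          (tendsto_const_nhds.sub tendsto_id)
        simpa using this.mono_left nhdsWithin_le_nhds
      · filter_upwards [self_mem_nhdsWithin] with k hk
        simpa using sub_pos.2 (mem_Iio.1 hk)
    have h2 : Tendsto (fun k => Real.log (B - k)) (𝓝[<] B) atBot :=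
      Real.tendsto_log_nhdsGT_zero.comp h1
    have h3 : Tendsto (fun k => 2*a*k - Real.log (B + k)) (𝓝[<] B) (𝓝 (2*a*B - Real.log (B + B))) := by
      apply Tendsto.mono_left _ nhdsWithin_le_nhds
      exact Tendsto.sub ((continuous_const.mul continuous_id).tendsto B)
        ((ContinuousAt.log (by fun_prop) (by positivity)).tendsto)
    have : Tendsto (fun k => (2*a*k - Real.log (B + k)) + Real.log (B - k)) (𝓝[<] B) atBot :=
      h3.add_atBot h2
    apply this.congr
    intro k; simp [hgdef]; ring
  refine ⟨htendsto, ?_⟩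
  -- find c with g c < 0
  have hev : ∀ᶠ k in 𝓝[<] B, g k < 0 ∧ k ∈ Ioo 0 B := by
    filter_upwards [htendsto.eventually (eventually_lt_atBot 0),
      Ioo_mem_nhdsLT_of_mem (⟨hB, le_refl B⟩ : B ∈ Ioc 0 B)] with k h1 h2
    exact ⟨h1, h2⟩
  obtain ⟨c, hgc, hc⟩ := hev.exists
  -- find b ∈ (0, c) with g b > 0
  have hd0 : HasDerivAt g (2*a - B⁻¹ - B⁻¹) 0 := by
    simpa using hderiv 0 ⟨by linarith, hB⟩
  have hd0pos : 0 < 2*a - B⁻¹ - B⁻¹ := by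
    have : B⁻¹ < a := by
      rw [inv_lt_iff_one_lt_mul₀ hB]
      linarith [hab]
    linarith
  have hslope : Tendsto (slope g 0) (𝓝[≠] 0) (𝓝 (2*a - B⁻¹ - B⁻¹)) :=
    hasDerivAt_iff_tendsto_slope.1 hd0
  have hbev : ∀ᶠ x in 𝓝[>] (0:ℝ), 0 < slope g 0 x ∧ x ∈ Ioo 0 c := by
    have h1 : ∀ᶠ x in 𝓝[≠] (0:ℝ), 0 < slope g 0 x :=
      hslope.eventually (eventually_gt_nhds hd0pos)
    have h2 : ∀ᶠ x in 𝓝[>] (0:ℝ), 0 < slope g 0 x :=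
      h1.filter_mono (nhdsWithin_mono 0 (fun x hx => ne_of_gt hx))
    filter_upwards [h2, Ioo_mem_nhdsGT_of_mem (⟨le_refl 0, hc.1⟩ : (0:ℝ) ∈ Ico 0 c)]
      with x hx1 hx2
    exact ⟨hx1, hx2⟩
  obtain ⟨b, hsb, hb⟩ := hbev.exists
  have hgb : 0 < g b := by
    have : slope g 0 b = g b / b := by
      rw [slope_def_field]; rw [hg0]; ring_nf
    rw [this] at hsb
    have := mul_pos hsb hb.1
    rwa [div_mul_cancel₀ _ (ne_of_gt hb.1)] at this
  -- IVT
  have hbc : b < c := hb.2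
  have hsub : Icc b c ⊆ Ico 0 B := fun x hx =>
    ⟨le_trans hb.1.le hx.1, lt_of_le_of_lt hx.2 hc.2⟩
  have hivt := intermediate_value_Ioo' hbc.le (hcont.mono hsub)
  have h0mem : (0:ℝ) ∈ Ioo (g c) (g b) := ⟨hgc, hgb⟩
  obtain ⟨k, hk, hgk⟩ := hivt h0mem
  have hkmem : k ∈ Ioo 0 B := ⟨lt_trans hb.1 hk.1, lt_trans hk.2 hc.2⟩
  refine ⟨k, ⟨hkmem, hgk⟩, ?_⟩
  rintro k' ⟨hk'mem, hgk'⟩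
  by_contra hne
  rcases lt_or_gt_of_ne hne with h | h
  · exact huniq k' k hk'mem hkmem h hgk' hgk
  · exact huniq k k' hkmem hk'mem h hgk hgk'
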